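/- arXiv:1207.4470 — 2 statements merged into one kernel-verified Lean document; each statement's English description precedes it below -/
import Mathlib

section
/- The 4-form ψ₀ is a calibration on (ℝ⁷, g₀): for any orthonormal quadruple u, v, w, x ∈ ℝ⁷ one has |ψ₀(u, v, w, x)| ≤ 1; moreover, for an orthonormal quadruple u, v, w, x, ψ₀(u, v, w, x) = 1 if and only if u = ½χ₀(v, w, x). -/
open scoped RealInnerProductSpace

noncomputable section

abbrev E7 : Type := EuclideanSpace ℝ (Fin 7)

/-- `dxⁱ ∧ dxʲ ∧ dxᵏ` evaluated on the triple `(u, v, w)`. -/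
def triDet (u v w : E7) (i j k : Fin 7) : ℝ :=
  Matrix.det !![u i, u j, u k; v i, v j, v k; w i, w j, w k]

/-- The standard G₂ 3-form `φ₀ = dx¹²³ + dx¹⁴⁵ + dx¹⁶⁷ + dx²⁴⁶ − dx²⁵⁷ − dx³⁴⁷ − dx³⁵⁶`
(here with 0-indexed coordinates). -/
def phi0 (u v w : E7) : ℝ :=
  triDet u v w 0 1 2 + triDet u v w 0 3 4 + triDet u v w 0 5 6 +
    triDet u v w 1 3 5 - triDet u v w 1 4 6 - triDet u v w 2 3 6 - triDet u v w 2 4 5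

/-- `dxⁱ ∧ dxʲ ∧ dxᵏ ∧ dxˡ` evaluated on the quadruple `(u, v, w, x)`. -/
def quadDet (u v w x : E7) (i j k l : Fin 7) : ℝ :=
  Matrix.det !![u i, u j, u k, u l; v i, v j, v k, v l;
                w i, w j, w k, w l; x i, x j, x k, x l]

/-- The 4-form `ψ₀ = −dx¹²⁴⁷ − dx¹²⁵⁶ − dx¹³⁴⁶ + dx¹³⁵⁷ + dx²³⁴⁵ + dx²³⁶⁷ + dx⁴⁵⁶⁷`
(here with 0-indexed coordinates). -/
def psi0 (u v w x : E7) : ℝ :=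
  -quadDet u v w x 0 1 3 6 - quadDet u v w x 0 1 4 5 - quadDet u v w x 0 2 3 5 +
    quadDet u v w x 0 2 4 6 + quadDet u v w x 1 2 3 4 + quadDet u v w x 1 2 5 6 +
    quadDet u v w x 3 4 5 6


lemma det4 (a b c d e f g h i j k l m n o p : ℝ) :
    Matrix.det !![a,b,c,d; e,f,g,h; i,j,k,l; m,n,o,p] =
      a*(f*(k*p-l*o)-g*(j*p-l*n)+h*(j*o-k*n))
    - b*(e*(k*p-l*o)-g*(i*p-l*m)+h*(i*o-k*m))
    + c*(e*(j*p-l*n)-f*(i*p-l*m)+h*(i*n-j*m))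
    - d*(e*(j*o-k*n)-f*(i*o-k*m)+g*(i*n-j*m)) := by
  simp [Matrix.det_succ_row_zero, Fin.sum_univ_succ, Fin.succAbove,
    Matrix.cons_val_succ, Fin.castSucc, Fin.castAdd, Fin.castLE]
  ring

lemma tri3 (u v w : E7) (i j k : Fin 7) :
    triDet u v w i j k =
      u i*(v j*w k - v k*w j) - u j*(v i*w k - v k*w i) + u k*(v i*w j - v j*w i) := by
  simp [triDet, Matrix.det_fin_three]; ring

lemma quad4 (u v w x : E7) (i j k l : Fin 7) :
    quadDet u v w x i j k l =
      u i*(v j*(w k*x l-w l*x k)-v k*(w j*x l-w l*x j)+v l*(w j*x k-w k*x j))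
    - u j*(v i*(w k*x l-w l*x k)-v k*(w i*x l-w l*x i)+v l*(w i*x k-w k*x i))
    + u k*(v i*(w j*x l-w l*x j)-v j*(w i*x l-w l*x i)+v l*(w i*x j-w j*x i))
    - u l*(v i*(w j*x k-w k*x j)-v j*(w i*x k-w k*x i)+v k*(w i*x j-w j*x i)) := by
  rw [quadDet, det4]

lemma psiE0 (v w x : E7) :
    psi0 (EuclideanSpace.single (0:Fin 7) 1) v w x = -(v 1*(w 3*x 6-w 6*x 3)-v 3*(w 1*x 6-w 6*x 1)+v 6*(w 1*x 3-w 3*x 1))-(v 1*(w 4*x 5-w 5*x 4)-v 4*(w 1*x 5-w 5*x 1)+v 5*(w 1*x 4-w 4*x 1))-(v 2*(w 3*x 5-w 5*x 3)-v 3*(w 2*x 5-w 5*x 2)+v 5*(w 2*x 3-w 3*x 2))+(v 2*(w 4*x 6-w 6*x 4)-v 4*(w 2*x 6-w 6*x 2)+v 6*(w 2*x 4-w 4*x 2)) := by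
  simp only [psi0, quad4, EuclideanSpace.single_apply, Fin.reduceEq, reduceIte,
    if_true, if_false]
  ring

lemma psiE1 (v w x : E7) :
    psi0 (EuclideanSpace.single (1:Fin 7) 1) v w x = (v 0*(w 3*x 6-w 6*x 3)-v 3*(w 0*x 6-w 6*x 0)+v 6*(w 0*x 3-w 3*x 0))+(v 0*(w 4*x 5-w 5*x 4)-v 4*(w 0*x 5-w 5*x 0)+v 5*(w 0*x 4-w 4*x 0))+(v 2*(w 3*x 4-w 4*x 3)-v 3*(w 2*x 4-w 4*x 2)+v 4*(w 2*x 3-w 3*x 2))+(v 2*(w 5*x 6-w 6*x 5)-v 5*(w 2*x 6-w 6*x 2)+v 6*(w 2*x 5-w 5*x 2)) := by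
  simp only [psi0, quad4, EuclideanSpace.single_apply, Fin.reduceEq, reduceIte,
    if_true, if_false]
  ring

lemma psiE2 (v w x : E7) :
    psi0 (EuclideanSpace.single (2:Fin 7) 1) v w x = (v 0*(w 3*x 5-w 5*x 3)-v 3*(w 0*x 5-w 5*x 0)+v 5*(w 0*x 3-w 3*x 0))-(v 0*(w 4*x 6-w 6*x 4)-v 4*(w 0*x 6-w 6*x 0)+v 6*(w 0*x 4-w 4*x 0))-(v 1*(w 3*x 4-w 4*x 3)-v 3*(w 1*x 4-w 4*x 1)+v 4*(w 1*x 3-w 3*x 1))-(v 1*(w 5*x 6-w 6*x 5)-v 5*(w 1*x 6-w 6*x 1)+v 6*(w 1*x 5-w 5*x 1)) := by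
  simp only [psi0, quad4, EuclideanSpace.single_apply, Fin.reduceEq, reduceIte,
    if_true, if_false]
  ring

lemma psiE3 (v w x : E7) :
    psi0 (EuclideanSpace.single (3:Fin 7) 1) v w x = -(v 0*(w 1*x 6-w 6*x 1)-v 1*(w 0*x 6-w 6*x 0)+v 6*(w 0*x 1-w 1*x 0))-(v 0*(w 2*x 5-w 5*x 2)-v 2*(w 0*x 5-w 5*x 0)+v 5*(w 0*x 2-w 2*x 0))+(v 1*(w 2*x 4-w 4*x 2)-v 2*(w 1*x 4-w 4*x 1)+v 4*(w 1*x 2-w 2*x 1))+(v 4*(w 5*x 6-w 6*x 5)-v 5*(w 4*x 6-w 6*x 4)+v 6*(w 4*x 5-w 5*x 4)) := by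
  simp only [psi0, quad4, EuclideanSpace.single_apply, Fin.reduceEq, reduceIte,
    if_true, if_false]
  ring

lemma psiE4 (v w x : E7) :
    psi0 (EuclideanSpace.single (4:Fin 7) 1) v w x = -(v 0*(w 1*x 5-w 5*x 1)-v 1*(w 0*x 5-w 5*x 0)+v 5*(w 0*x 1-w 1*x 0))+(v 0*(w 2*x 6-w 6*x 2)-v 2*(w 0*x 6-w 6*x 0)+v 6*(w 0*x 2-w 2*x 0))-(v 1*(w 2*x 3-w 3*x 2)-v 2*(w 1*x 3-w 3*x 1)+v 3*(w 1*x 2-w 2*x 1))-(v 3*(w 5*x 6-w 6*x 5)-v 5*(w 3*x 6-w 6*x 3)+v 6*(w 3*x 5-w 5*x 3)) := by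
  simp only [psi0, quad4, EuclideanSpace.single_apply, Fin.reduceEq, reduceIte,
    if_true, if_false]
  ring

lemma psiE5 (v w x : E7) :
    psi0 (EuclideanSpace.single (5:Fin 7) 1) v w x = (v 0*(w 1*x 4-w 4*x 1)-v 1*(w 0*x 4-w 4*x 0)+v 4*(w 0*x 1-w 1*x 0))+(v 0*(w 2*x 3-w 3*x 2)-v 2*(w 0*x 3-w 3*x 0)+v 3*(w 0*x 2-w 2*x 0))+(v 1*(w 2*x 6-w 6*x 2)-v 2*(w 1*x 6-w 6*x 1)+v 6*(w 1*x 2-w 2*x 1))+(v 3*(w 4*x 6-w 6*x 4)-v 4*(w 3*x 6-w 6*x 3)+v 6*(w 3*x 4-w 4*x 3)) := by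
  simp only [psi0, quad4, EuclideanSpace.single_apply, Fin.reduceEq, reduceIte,
    if_true, if_false]
  ring

lemma psiE6 (v w x : E7) :
    psi0 (EuclideanSpace.single (6:Fin 7) 1) v w x = (v 0*(w 1*x 3-w 3*x 1)-v 1*(w 0*x 3-w 3*x 0)+v 3*(w 0*x 1-w 1*x 0))-(v 0*(w 2*x 4-w 4*x 2)-v 2*(w 0*x 4-w 4*x 0)+v 4*(w 0*x 2-w 2*x 0))-(v 1*(w 2*x 5-w 5*x 2)-v 2*(w 1*x 5-w 5*x 1)+v 5*(w 1*x 2-w 2*x 1))-(v 3*(w 4*x 5-w 5*x 4)-v 4*(w 3*x 5-w 5*x 3)+v 5*(w 3*x 4-w 4*x 3)) := by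
  simp only [psi0, quad4, EuclideanSpace.single_apply, Fin.reduceEq, reduceIte,
    if_true, if_false]
  ring

lemma phiE (v w x : E7) : phi0 v w x = (v 0*(w 1*x 2-w 2*x 1)-v 1*(w 0*x 2-w 2*x 0)+v 2*(w 0*x 1-w 1*x 0))+(v 0*(w 3*x 4-w 4*x 3)-v 3*(w 0*x 4-w 4*x 0)+v 4*(w 0*x 3-w 3*x 0))+(v 0*(w 5*x 6-w 6*x 5)-v 5*(w 0*x 6-w 6*x 0)+v 6*(w 0*x 5-w 5*x 0))+(v 1*(w 3*x 5-w 5*x 3)-v 3*(w 1*x 5-w 5*x 1)+v 5*(w 1*x 3-w 3*x 1))-(v 1*(w 4*x 6-w 6*x 4)-v 4*(w 1*x 6-w 6*x 1)+v 6*(w 1*x 4-w 4*x 1))-(v 2*(w 3*x 6-w 6*x 3)-v 3*(w 2*x 6-w 6*x 2)+v 6*(w 2*x 3-w 3*x 2))-(v 2*(w 4*x 5-w 5*x 4)-v 4*(w 2*x 5-w 5*x 2)+v 5*(w 2*x 4-w 4*x 2)) := by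
  simp only [phi0, tri3]

lemma innerE (a b : E7) :
    ⟪a,b⟫ = a 0*b 0 + a 1*b 1 + a 2*b 2 + a 3*b 3 + a 4*b 4 + a 5*b 5 + a 6*b 6 := by
  simp [PiLp.inner_apply, Fin.sum_univ_seven]; ring

set_option maxHeartbeats 4000000 in
lemma key (v w x : E7) :
    (∑ i : Fin 7, (psi0 (EuclideanSpace.single i 1) v w x)^2) + (phi0 v w x)^2 =
    ⟪v,v⟫*⟪w,w⟫*⟪x,x⟫ + 2*⟪v,w⟫*⟪v,x⟫*⟪w,x⟫
      - ⟪v,v⟫*⟪w,x⟫^2 - ⟪w,w⟫*⟪v,x⟫^2 - ⟪x,x⟫*⟪v,w⟫^2 := by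
  rw [Fin.sum_univ_seven, psiE0, psiE1, psiE2, psiE3, psiE4, psiE5, psiE6, phiE,
    innerE v v, innerE w w, innerE x x, innerE v w, innerE v x, innerE w x]
  ring

/-- `ψ₀` is a calibration: for any orthonormal quadruple `u, v, w, x`,
`|ψ₀(u,v,w,x)| ≤ 1`; moreover `ψ₀(u,v,w,x) = 1` if and only if `u = ½χ₀(v,w,x)`. -/
theorem statement4 (chi : E7 → E7 → E7 → E7)
    (hchi : ∀ a b c d : E7, ⟪a, (1/2 : ℝ) • chi b c d⟫ = psi0 a b c d)
    (u v w x : E7)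
    (hu : ‖u‖ = 1) (hv : ‖v‖ = 1) (hw : ‖w‖ = 1) (hx : ‖x‖ = 1)
    (huv : ⟪u, v⟫ = 0) (huw : ⟪u, w⟫ = 0) (hux : ⟪u, x⟫ = 0)
    (hvw : ⟪v, w⟫ = 0) (hvx : ⟪v, x⟫ = 0) (hwx : ⟪w, x⟫ = 0) :
    |psi0 u v w x| ≤ 1 ∧ (psi0 u v w x = 1 ↔ u = (1/2 : ℝ) • chi v w x) := by
  set m : E7 := (1/2 : ℝ) • chi v w x with hmdef
  have hinner : ∀ a : E7, ⟪a, m⟫ = psi0 a v w x := fun a => hchi a v w x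
  have hmi : ∀ i : Fin 7, m i = psi0 (EuclideanSpace.single i 1) v w x := by
    intro i
    rw [← hinner]
    simp [PiLp.inner_apply, EuclideanSpace.single_apply]
  have hvv : ⟪v, v⟫ = 1 := by rw [real_inner_self_eq_norm_sq, hv]; norm_num
  have hww : ⟪w, w⟫ = 1 := by rw [real_inner_self_eq_norm_sq, hw]; norm_num
  have hxx : ⟪x, x⟫ = 1 := by rw [real_inner_self_eq_norm_sq, hx]; norm_num
  have hkey := key v w x
  rw [hvv, hww, hxx, hvw, hvx, hwx] at hkey
  have hmm : ⟪m, m⟫ = ∑ i : Fin 7, (psi0 (EuclideanSpace.single i 1) v w x)^2 := by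
    simp only [PiLp.inner_apply, RCLike.inner_apply, conj_trivial]
    exact Finset.sum_congr rfl fun i _ => by rw [hmi i]; ring
  have hmsq : ‖m‖^2 ≤ 1 := by
    rw [← real_inner_self_eq_norm_sq, hmm]
    nlinarith [sq_nonneg (phi0 v w x)]
  have hmle : ‖m‖ ≤ 1 := by nlinarith [norm_nonneg m]
  have habs : |psi0 u v w x| ≤ 1 := by
    rw [← hinner u]
    calc |⟪u, m⟫| ≤ ‖u‖ * ‖m‖ := abs_real_inner_le_norm u m
      _ = ‖m‖ := by rw [hu, one_mul]
      _ ≤ 1 := hmle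
  refine ⟨habs, ?_, ?_⟩
  · intro h1
    have h1' : ⟪u, m⟫ = 1 := by rw [hinner u]; exact h1
    have hcs : ⟪u, m⟫ ≤ ‖u‖ * ‖m‖ := real_inner_le_norm u m
    have hm1 : ‖m‖ = 1 := by
      rw [h1', hu, one_mul] at hcs; linarith
    have heq : ⟪u, m⟫ = ‖u‖ * ‖m‖ := by rw [h1', hu, hm1]; norm_num
    have := inner_eq_norm_mul_iff_real.mp heq
    rw [hu, hm1, one_smul, one_smul] at this
    exact this
  · intro h
    rw [← hinner u, h, real_inner_self_eq_norm_sq, ← h, hu]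
    norm_num
end
end

section
/- Let L be a 3-dimensional real subspace of ℂ³ ⊂ ℝ⁷. Then L admits an orthonormal basis (v₁, v₂, v₃) with φ₀(v₁, v₂, v₃) = 1 (i.e. L is an associative 3-plane in ℝ⁷) if and only if L is special Lagrangian, i.e. ω₀ and Im Ω₀ vanish identically on L. -/
set_option maxHeartbeats 1000000


open scoped RealInnerProductSpace

noncomputable section

/-- `ℂ³` with its standard Hermitian inner ℂ product. -/
abbrev C3 : Type := EuclideanSpace ℂ (Fin 3)

/-- The inclusion `ℂ³ ⊂ ℝ⁷ = ℝ ⊕ ℂ³` given by the complex coordinates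
`z¹ = x² + ix³`, `z² = x⁴ + ix⁵`, `z³ = x⁶ + ix⁷` (0-indexed: `e₁` is index 0). -/
def toR7 (z : C3) : E7 :=
  (WithLp.equiv 2 (Fin 7 → ℝ)).symm
    ![0, (z 0).re, (z 0).im, (z 1).re, (z 1).im, (z 2).re, (z 2).im]

/-- The basis vector `e₁` spanning the `ℝ` factor of `ℝ⁷ = ℝ ⊕ ℂ³`. -/
def E1 : E7 := EuclideanSpace.single 0 1

/-- The standard Kähler form `ω₀(u, v) = g₀(iu, v)` on `ℂ³`, `g₀ = Re⟨·,·⟩`. -/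
def omegaC3 (u v : C3) : ℝ := (inner ℂ (Complex.I • u) v : ℂ).re

/-- The standard complex volume form `Ω₀ = dz¹∧dz²∧dz³` on `ℂ³`: the determinant of
the complex 3×3 matrix with columns `v₁, v₂, v₃`. -/
def OmegaC3 (v₁ v₂ v₃ : C3) : ℂ :=
  Matrix.det !![v₁ 0, v₂ 0, v₃ 0; v₁ 1, v₂ 1, v₃ 1; v₁ 2, v₂ 2, v₃ 2]


lemma SL_apply_smulC (c : ℂ) (x : C3) (i : Fin 3) : (c • x) i = c * x i := rfl
lemma SL_apply_add (x y : C3) (i : Fin 3) : (x + y) i = x i + y i := rfl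
lemma SL_apply_smul (r : ℝ) (x : C3) (i : Fin 3) : (r • x) i = (r : ℂ) * x i := by
  simp [Complex.real_smul]

lemma SL_Omega_eq (v₁ v₂ v₃ : C3) : OmegaC3 v₁ v₂ v₃ =
    v₁ 0 * (v₂ 1 * v₃ 2 - v₃ 1 * v₂ 2) - v₂ 0 * (v₁ 1 * v₃ 2 - v₃ 1 * v₁ 2)
      + v₃ 0 * (v₁ 1 * v₂ 2 - v₂ 1 * v₁ 2) := by
  simp [OmegaC3, Matrix.det_fin_three]
  ring

lemma SL_gram_identity (v₁ v₂ v₃ : C3) :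
    OmegaC3 v₁ v₂ v₃ * (starRingEnd ℂ) (OmegaC3 v₁ v₂ v₃) =
    (inner ℂ v₁ v₁ : ℂ) * inner ℂ v₂ v₂ * inner ℂ v₃ v₃
    + (inner ℂ v₁ v₂ : ℂ) * inner ℂ v₂ v₃ * (starRingEnd ℂ) (inner ℂ v₁ v₃ : ℂ)
    + (starRingEnd ℂ) (inner ℂ v₁ v₂ : ℂ) * (inner ℂ v₁ v₃ : ℂ) * (starRingEnd ℂ) (inner ℂ v₂ v₃ : ℂ)
    - (inner ℂ v₁ v₁ : ℂ) * (inner ℂ v₂ v₃ : ℂ) * (starRingEnd ℂ) (inner ℂ v₂ v₃ : ℂ)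
    - (inner ℂ v₂ v₂ : ℂ) * (inner ℂ v₁ v₃ : ℂ) * (starRingEnd ℂ) (inner ℂ v₁ v₃ : ℂ)
    - (inner ℂ v₃ v₃ : ℂ) * (inner ℂ v₁ v₂ : ℂ) * (starRingEnd ℂ) (inner ℂ v₁ v₂ : ℂ) := by
  simp only [SL_Omega_eq, PiLp.inner_apply, RCLike.inner_apply, Fin.sum_univ_three,
    map_add, map_mul, map_sub, Complex.conj_conj]
  ring

lemma SL_omega_eq_im (u v : C3) : omegaC3 u v = (inner ℂ u v : ℂ).im := by
  simp [omegaC3, inner_smul_left, Complex.mul_re]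

lemma SL_toR7_0 (z : C3) : toR7 z 0 = 0 := rfl
lemma SL_toR7_1 (z : C3) : toR7 z 1 = (z 0).re := rfl
lemma SL_toR7_2 (z : C3) : toR7 z 2 = (z 0).im := rfl
lemma SL_toR7_3 (z : C3) : toR7 z 3 = (z 1).re := rfl
lemma SL_toR7_4 (z : C3) : toR7 z 4 = (z 1).im := rfl
lemma SL_toR7_5 (z : C3) : toR7 z 5 = (z 2).re := rfl
lemma SL_toR7_6 (z : C3) : toR7 z 6 = (z 2).im := rfl

lemma SL_phi0_toR7 (u v w : C3) : phi0 (toR7 u) (toR7 v) (toR7 w) = (OmegaC3 u v w).re := by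
  simp only [phi0, triDet, OmegaC3, SL_toR7_0, SL_toR7_1, SL_toR7_2, SL_toR7_3, SL_toR7_4,
    SL_toR7_5, SL_toR7_6]
  simp [Matrix.det_fin_three, Complex.add_re, Complex.sub_re, Complex.mul_re,
    Complex.mul_im, Complex.add_im, Complex.sub_im, Matrix.vecHead, Matrix.vecTail]
  ring

lemma SL_Omega_combo (a₁ a₂ a₃ b₁ b₂ b₃ c₁ c₂ c₃ : ℝ) (v₁ v₂ v₃ : C3) :
    OmegaC3 (a₁ • v₁ + a₂ • v₂ + a₃ • v₃) (b₁ • v₁ + b₂ • v₂ + b₃ • v₃)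
      (c₁ • v₁ + c₂ • v₂ + c₃ • v₃)
    = ((a₁ * (b₂ * c₃ - b₃ * c₂) - a₂ * (b₁ * c₃ - b₃ * c₁) + a₃ * (b₁ * c₂ - b₂ * c₁) : ℝ) : ℂ)
        * OmegaC3 v₁ v₂ v₃ := by
  simp only [OmegaC3, Matrix.det_fin_three, SL_apply_add, SL_apply_smul]
  simp
  ring

lemma SL_omega_combo (a₁ a₂ a₃ b₁ b₂ b₃ : ℝ) (v₁ v₂ v₃ : C3) :
    omegaC3 (a₁ • v₁ + a₂ • v₂ + a₃ • v₃) (b₁ • v₁ + b₂ • v₂ + b₃ • v₃)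
    = (a₁ * b₂ - a₂ * b₁) * omegaC3 v₁ v₂ + (a₁ * b₃ - a₃ * b₁) * omegaC3 v₁ v₃
      + (a₂ * b₃ - a₃ * b₂) * omegaC3 v₂ v₃ := by
  simp only [omegaC3, PiLp.inner_apply, RCLike.inner_apply, Fin.sum_univ_three,
    SL_apply_smulC, SL_apply_add, SL_apply_smul]
  simp only [map_add, map_mul, Complex.add_re, Complex.mul_re, Complex.mul_im, Complex.add_im,
    Complex.conj_re, Complex.conj_im, Complex.I_re, Complex.I_im, Complex.ofReal_re,
    Complex.ofReal_im]
  ring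

lemma SL_Omega_swap (v₁ v₂ v₃ : C3) : OmegaC3 v₂ v₁ v₃ = - OmegaC3 v₁ v₂ v₃ := by
  rw [SL_Omega_eq, SL_Omega_eq]; ring

lemma SL_mem_span3 {x v₁ v₂ v₃ : C3}
    (hx : x ∈ Submodule.span ℝ ({v₁, v₂, v₃} : Set C3)) :
    ∃ a b c : ℝ, x = a • v₁ + b • v₂ + c • v₃ := by
  simp only [Submodule.mem_span_insert, Submodule.mem_span_singleton] at hx
  obtain ⟨a, y, ⟨b, z, ⟨c, rfl⟩, rfl⟩, rfl⟩ := hx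
  exact ⟨a, b, c, by rw [add_assoc]⟩

lemma SL_key (v₁ v₂ v₃ : C3) (a b c : ℝ)
    (h1 : (inner ℂ v₁ v₁ : ℂ) = 1) (h2 : (inner ℂ v₂ v₂ : ℂ) = 1) (h3 : (inner ℂ v₃ v₃ : ℂ) = 1)
    (h12 : (inner ℂ v₁ v₂ : ℂ) = (a : ℂ) * Complex.I)
    (h13 : (inner ℂ v₁ v₃ : ℂ) = (b : ℂ) * Complex.I)
    (h23 : (inner ℂ v₂ v₃ : ℂ) = (c : ℂ) * Complex.I) :
    Complex.normSq (OmegaC3 v₁ v₂ v₃) = 1 - a ^ 2 - b ^ 2 - c ^ 2 := by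
  have g := SL_gram_identity v₁ v₂ v₃
  rw [h1, h2, h3, h12, h13, h23, Complex.mul_conj] at g
  have h : ((Complex.normSq (OmegaC3 v₁ v₂ v₃) : ℝ) : ℂ)
      = ((1 - a ^ 2 - b ^ 2 - c ^ 2 : ℝ) : ℂ) := by
    rw [g]
    simp only [map_mul, Complex.conj_I, Complex.conj_ofReal]
    push_cast
    linear_combination ((a : ℂ) ^ 2 + (b : ℂ) ^ 2 + (c : ℂ) ^ 2) * Complex.I_mul_I
  exact_mod_cast h

/-- For a 3-dimensional real subspace `L ⊆ ℂ³ ⊂ ℝ⁷`: `L` admits an orthonormal basis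
`(v₁, v₂, v₃)` with `φ₀(v₁, v₂, v₃) = 1` (i.e. `L` is an associative 3-plane in `ℝ⁷`) if
and only if `L` is special Lagrangian, i.e. `ω₀` and `Im Ω₀` vanish identically on `L`. -/
theorem statement9 (L : Submodule ℝ C3) (hdim : Module.finrank ℝ L = 3) :
    (∃ v₁ v₂ v₃ : C3, v₁ ∈ L ∧ v₂ ∈ L ∧ v₃ ∈ L ∧
      ‖v₁‖ = 1 ∧ ‖v₂‖ = 1 ∧ ‖v₃‖ = 1 ∧
      (inner ℂ v₁ v₂ : ℂ).re = 0 ∧ (inner ℂ v₁ v₃ : ℂ).re = 0 ∧ (inner ℂ v₂ v₃ : ℂ).re = 0 ∧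
      Submodule.span ℝ ({v₁, v₂, v₃} : Set C3) = L ∧
      phi0 (toR7 v₁) (toR7 v₂) (toR7 v₃) = 1) ↔
    ((∀ u ∈ L, ∀ w ∈ L, omegaC3 u w = 0) ∧
      (∀ u ∈ L, ∀ v ∈ L, ∀ w ∈ L, (OmegaC3 u v w).im = 0)) := by
  constructor
  · rintro ⟨v₁, v₂, v₃, hm1, hm2, hm3, n1, n2, n3, o12, o13, o23, hspan, hphi⟩
    have h1 : (inner ℂ v₁ v₁ : ℂ) = 1 := by
      rw [inner_self_eq_norm_sq_to_K, n1]; norm_num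
    have h2 : (inner ℂ v₂ v₂ : ℂ) = 1 := by
      rw [inner_self_eq_norm_sq_to_K, n2]; norm_num
    have h3 : (inner ℂ v₃ v₃ : ℂ) = 1 := by
      rw [inner_self_eq_norm_sq_to_K, n3]; norm_num
    have e12 : (inner ℂ v₁ v₂ : ℂ) = ((inner ℂ v₁ v₂ : ℂ).im : ℂ) * Complex.I := by
      rw [Complex.ext_iff]
      constructor
      · simpa [Complex.mul_re] using o12
      · simp [Complex.mul_im]
    have e13 : (inner ℂ v₁ v₃ : ℂ) = ((inner ℂ v₁ v₃ : ℂ).im : ℂ) * Complex.I := by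
      rw [Complex.ext_iff]
      constructor
      · simpa [Complex.mul_re] using o13
      · simp [Complex.mul_im]
    have e23 : (inner ℂ v₂ v₃ : ℂ) = ((inner ℂ v₂ v₃ : ℂ).im : ℂ) * Complex.I := by
      rw [Complex.ext_iff]
      constructor
      · simpa [Complex.mul_re] using o23
      · simp [Complex.mul_im]
    have hk := SL_key v₁ v₂ v₃ _ _ _ h1 h2 h3 e12 e13 e23
    have hre : (OmegaC3 v₁ v₂ v₃).re = 1 := by rw [← SL_phi0_toR7]; exact hphi
    have hns : Complex.normSq (OmegaC3 v₁ v₂ v₃)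
        = 1 + (OmegaC3 v₁ v₂ v₃).im ^ 2 := by
      rw [Complex.normSq_apply, hre]; ring
    have hsum : (OmegaC3 v₁ v₂ v₃).im ^ 2 + (inner ℂ v₁ v₂ : ℂ).im ^ 2
        + (inner ℂ v₁ v₃ : ℂ).im ^ 2 + (inner ℂ v₂ v₃ : ℂ).im ^ 2 = 0 := by
      rw [hns] at hk; linarith
    have hA : (inner ℂ v₁ v₂ : ℂ).im = 0 := by
      nlinarith [sq_nonneg (OmegaC3 v₁ v₂ v₃).im, sq_nonneg (inner ℂ v₁ v₃ : ℂ).im,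
        sq_nonneg (inner ℂ v₂ v₃ : ℂ).im, sq_nonneg (inner ℂ v₁ v₂ : ℂ).im]
    have hB : (inner ℂ v₁ v₃ : ℂ).im = 0 := by
      nlinarith [sq_nonneg (OmegaC3 v₁ v₂ v₃).im, sq_nonneg (inner ℂ v₁ v₃ : ℂ).im,
        sq_nonneg (inner ℂ v₂ v₃ : ℂ).im, sq_nonneg (inner ℂ v₁ v₂ : ℂ).im]
    have hC : (inner ℂ v₂ v₃ : ℂ).im = 0 := by
      nlinarith [sq_nonneg (OmegaC3 v₁ v₂ v₃).im, sq_nonneg (inner ℂ v₁ v₃ : ℂ).im,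
        sq_nonneg (inner ℂ v₂ v₃ : ℂ).im, sq_nonneg (inner ℂ v₁ v₂ : ℂ).im]
    have hIm : (OmegaC3 v₁ v₂ v₃).im = 0 := by
      nlinarith [sq_nonneg (OmegaC3 v₁ v₂ v₃).im, sq_nonneg (inner ℂ v₁ v₃ : ℂ).im,
        sq_nonneg (inner ℂ v₂ v₃ : ℂ).im, sq_nonneg (inner ℂ v₁ v₂ : ℂ).im]
    constructor
    · intro u hu w hw
      rw [← hspan] at hu hw
      obtain ⟨a₁, a₂, a₃, rfl⟩ := SL_mem_span3 hu
      obtain ⟨b₁, b₂, b₃, rfl⟩ := SL_mem_span3 hw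
      rw [SL_omega_combo, SL_omega_eq_im, SL_omega_eq_im, SL_omega_eq_im, hA, hB, hC]
      ring
    · intro u hu x hx w hw
      rw [← hspan] at hu hx hw
      obtain ⟨a₁, a₂, a₃, rfl⟩ := SL_mem_span3 hu
      obtain ⟨b₁, b₂, b₃, rfl⟩ := SL_mem_span3 hx
      obtain ⟨c₁, c₂, c₃, rfl⟩ := SL_mem_span3 hw
      rw [SL_Omega_combo]
      simp [Complex.mul_im, hIm]
  · rintro ⟨hω, hΩ⟩
    letI : InnerProductSpace ℝ C3 := InnerProductSpace.rclikeToReal ℂ C3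
    haveI : FiniteDimensional ℝ C3 := by infer_instance
    let b : OrthonormalBasis (Fin 3) ℝ L := (stdOrthonormalBasis ℝ L).reindex (finCongr hdim)
    have hnorm : ∀ i, ‖(b i : C3)‖ = 1 := fun i => b.orthonormal.1 i
    have hmem : ∀ i, (b i : C3) ∈ L := fun i => SetLike.coe_mem _
    have hre0 : ∀ i j, i ≠ j → ((inner ℂ (b i : C3) (b j : C3) : ℂ)).re = 0 :=
      fun i j hij => b.orthonormal.2 hij
    have him0 : ∀ i j, (inner ℂ (b i : C3) (b j : C3) : ℂ).im = 0 := fun i j => by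
      rw [← SL_omega_eq_im]; exact hω _ (hmem i) _ (hmem j)
    have hin : ∀ i j, i ≠ j → (inner ℂ (b i : C3) (b j : C3) : ℂ) = 0 := fun i j hij => by
      apply Complex.ext
      · simpa using hre0 i j hij
      · simpa using him0 i j
    have hdiag : ∀ i, (inner ℂ (b i : C3) (b i : C3) : ℂ) = 1 := fun i => by
      rw [inner_self_eq_norm_sq_to_K, hnorm i]; norm_num
    have hz : ∀ i j, i ≠ j →
        (inner ℂ (b i : C3) (b j : C3) : ℂ) = ((0 : ℝ) : ℂ) * Complex.I := fun i j hij => by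
      rw [hin i j hij]; simp
    have hk := SL_key (b 0 : C3) (b 1 : C3) (b 2 : C3) 0 0 0 (hdiag 0) (hdiag 1) (hdiag 2)
      (hz 0 1 (by decide)) (hz 0 2 (by decide)) (hz 1 2 (by decide))
    have hIm : (OmegaC3 (b 0 : C3) (b 1 : C3) (b 2 : C3)).im = 0 :=
      hΩ _ (hmem 0) _ (hmem 1) _ (hmem 2)
    have hsq : (OmegaC3 (b 0 : C3) (b 1 : C3) (b 2 : C3)).re ^ 2 = 1 := by
      have := Complex.normSq_apply (OmegaC3 (b 0 : C3) (b 1 : C3) (b 2 : C3))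
      rw [hk] at this
      nlinarith [hIm]
    have hspan : Submodule.span ℝ ({(b 0 : C3), (b 1 : C3), (b 2 : C3)} : Set C3) = L := by
      apply le_antisymm
      · rw [Submodule.span_le]
        intro x hx
        simp only [Set.mem_insert_iff, Set.mem_singleton_iff] at hx
        rcases hx with rfl | rfl | rfl <;> exact SetLike.coe_mem _
      · intro x hx
        have hxe : x = ∑ i, b.repr ⟨x, hx⟩ i • (b i : C3) := by
          conv_lhs => rw [show x = ((⟨x, hx⟩ : L) : C3) from rfl, ← b.sum_repr ⟨x, hx⟩]
          push_cast
          rfl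
        rw [hxe, Fin.sum_univ_three]
        have m : ∀ i : Fin 3, (b i : C3) ∈
            Submodule.span ℝ ({(b 0 : C3), (b 1 : C3), (b 2 : C3)} : Set C3) := by
          intro i
          apply Submodule.subset_span
          fin_cases i <;> simp
        exact Submodule.add_mem _ (Submodule.add_mem _ (Submodule.smul_mem _ _ (m 0))
          (Submodule.smul_mem _ _ (m 1))) (Submodule.smul_mem _ _ (m 2))
    have hre_cases : (OmegaC3 (b 0 : C3) (b 1 : C3) (b 2 : C3)).re = 1 ∨
        (OmegaC3 (b 0 : C3) (b 1 : C3) (b 2 : C3)).re = -1 := by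
      rcases mul_eq_zero.mp (show ((OmegaC3 (b 0 : C3) (b 1 : C3) (b 2 : C3)).re - 1) *
          ((OmegaC3 (b 0 : C3) (b 1 : C3) (b 2 : C3)).re + 1) = 0 by nlinarith) with h | h
      · left; linarith
      · right; linarith
    rcases hre_cases with h | h
    · exact ⟨(b 0 : C3), (b 1 : C3), (b 2 : C3), hmem 0, hmem 1, hmem 2,
        hnorm 0, hnorm 1, hnorm 2,
        by rw [hin 0 1 (by decide)]; simp, by rw [hin 0 2 (by decide)]; simp,
        by rw [hin 1 2 (by decide)]; simp, hspan, by rw [SL_phi0_toR7]; exact h⟩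
    · refine ⟨(b 1 : C3), (b 0 : C3), (b 2 : C3), hmem 1, hmem 0, hmem 2,
        hnorm 1, hnorm 0, hnorm 2, ?_, ?_, ?_, ?_, ?_⟩
      · rw [← inner_conj_symm, hin 0 1 (by decide)]; simp
      · rw [hin 1 2 (by decide)]; simp
      · rw [hin 0 2 (by decide)]; simp
      · rw [Set.insert_comm]; exact hspan
      · rw [SL_phi0_toR7, SL_Omega_swap]
        simp [h]
end
end
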